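/- Let G be a graph and δ : E(G) → {red, blue} a surjective edge coloring with red edge set E_r and blue edge set E_b. Then δ is a NAC-coloring if and only if the connected components of the edge-induced subgraph G[E_r] and of G[E_b] are induced subgraphs of G. -/

import Mathlib

open SimpleGraph

def IsNACColoring {V : Type*} (G : SimpleGraph V) (δ : Sym2 V → Bool) : Prop :=
  (∃ e ∈ G.edgeSet, δ e = true) ∧ (∃ e ∈ G.edgeSet, δ e = false) ∧
  ∀ ⦃u : V⦄ (w : G.Walk u u), w.IsCycle →
    ∀ b : Bool, (w.edges.countP fun e => δ e == b) ≠ 1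

/-- The spanning subgraph of `G` consisting of the edges of color `c`. -/
def colorSubgraph {V : Type*} (G : SimpleGraph V) (δ : Sym2 V → Bool) (c : Bool) :
    SimpleGraph V :=
  SimpleGraph.fromEdgeSet {e | e ∈ G.edgeSet ∧ δ e = c}

lemma mem_colorSubgraph_edgeSet {V : Type*} {G : SimpleGraph V} {δ : Sym2 V → Bool} {c : Bool}
    {e : Sym2 V} (h : e ∈ G.edgeSet) (hc : δ e = c) : e ∈ (colorSubgraph G δ c).edgeSet := by
  rw [colorSubgraph, edgeSet_fromEdgeSet]
  exact ⟨⟨h, hc⟩, G.not_isDiag_of_mem_edgeSet h⟩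

lemma colorSubgraph_edge_prop {V : Type*} {G : SimpleGraph V} {δ : Sym2 V → Bool} {c : Bool}
    {e : Sym2 V} (h : e ∈ (colorSubgraph G δ c).edgeSet) : e ∈ G.edgeSet ∧ δ e = c := by
  rw [colorSubgraph, edgeSet_fromEdgeSet] at h
  exact h.1

/-- Key induction: in a walk with nodup edges, if `s(x,y)` occurs and every other edge
has color `!b`, then deleting that edge leaves `x` and `y` connected to the endpoints
in the `!b`-colored subgraph. -/
lemma reach_aux {V : Type*} {G : SimpleGraph V} {δ : Sym2 V → Bool} {b : Bool} :
    ∀ {a d : V} (w : G.Walk a d), w.edges.Nodup →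
      ∀ x y : V, s(x, y) ∈ w.edges →
      (∀ e ∈ w.edges, e ≠ s(x, y) → δ e = !b) →
      ((colorSubgraph G δ (!b)).Reachable a x ∧ (colorSubgraph G δ (!b)).Reachable y d) ∨
      ((colorSubgraph G δ (!b)).Reachable a y ∧ (colorSubgraph G δ (!b)).Reachable x d) := by
  intro a d w
  induction w with
  | nil => intro _ x y hxy _; simp at hxy
  | @cons a c d h q ih =>
    intro hnd x y hxy hall
    rw [Walk.edges_cons] at hxy hall
    rw [Walk.edges_cons, List.nodup_cons] at hnd
    rcases List.mem_cons.1 hxy with heq | hmem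
    · -- first edge is s(x,y)
      have hq : ∀ e ∈ q.edges, e ≠ s(x, y) := by
        intro e he
        rintro rfl
        exact hnd.1 (heq ▸ he)
      have hreach : (colorSubgraph G δ (!b)).Reachable c d :=
        ⟨q.transfer _ (fun e he => mem_colorSubgraph_edgeSet (q.edges_subset_edgeSet he)
          (hall e (List.mem_cons_of_mem _ he) (hq e he)))⟩
      rw [Sym2.eq_iff] at heq
      rcases heq with ⟨rfl, rfl⟩ | ⟨rfl, rfl⟩
      · exact Or.inl ⟨Reachable.refl _, hreach⟩
      · exact Or.inr ⟨Reachable.refl _, hreach⟩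
    · -- first edge is not s(x,y)
      have hne : s(a, c) ≠ s(x, y) := by
        rintro heq; exact hnd.1 (heq ▸ hmem)
      have hcol : δ s(a, c) = !b := hall _ List.mem_cons_self hne
      have hadj : (colorSubgraph G δ (!b)).Adj a c := by
        rw [colorSubgraph, fromEdgeSet_adj]
        exact ⟨⟨G.mem_edgeSet.2 h, hcol⟩, h.ne⟩
      rcases ih hnd.2 x y hmem (fun e he hne' => hall e (List.mem_cons_of_mem _ he) hne') with
        ⟨h1, h2⟩ | ⟨h1, h2⟩
      · exact Or.inl ⟨hadj.reachable.trans h1, h2⟩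
      · exact Or.inr ⟨hadj.reachable.trans h1, h2⟩

theorem isNACColoring_iff_components_induced {V : Type*} (G : SimpleGraph V)
    (δ : Sym2 V → Bool)
    (hsurj : (∃ e ∈ G.edgeSet, δ e = true) ∧ (∃ e ∈ G.edgeSet, δ e = false)) :
    IsNACColoring G δ ↔
      ∀ (c : Bool) (u v : V), G.Adj u v → (colorSubgraph G δ c).Reachable u v →
        δ s(u, v) = c := by
  classical
  constructor
  · rintro ⟨-, -, hnac⟩ c u v hadj hreach
    by_contra hne
    have hcol : δ s(u, v) = !c := by
      cases hδ : δ s(u, v) <;> cases c <;> simp_all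
    obtain ⟨q⟩ := hreach.symm
    set p := q.bypass with hp
    have hpedges : ∀ e ∈ p.edges, e ∈ (colorSubgraph G δ c).edgeSet :=
      fun e he => p.edges_subset_edgeSet he
    have hpcol : ∀ e ∈ p.edges, δ e = c := fun e he => (colorSubgraph_edge_prop (hpedges e he)).2
    have hpG : ∀ e ∈ p.edges, e ∈ G.edgeSet :=
      fun e he => (colorSubgraph_edge_prop (hpedges e he)).1
    set pG := p.transfer G hpG with hpGdef
    have hpGpath : pG.IsPath := Walk.IsPath.transfer _ q.bypass_isPath
    have hedges : pG.edges = p.edges := p.edges_transfer hpG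
    have hnotmem : s(u, v) ∉ pG.edges := by
      rw [hedges]
      intro hmem
      rw [hpcol _ hmem] at hne
      exact hne rfl
    have hcyc : (Walk.cons hadj pG).IsCycle :=
      (Walk.cons_isCycle_iff pG hadj).2 ⟨hpGpath, hnotmem⟩
    apply hnac _ hcyc (!c)
    rw [Walk.edges_cons, List.countP_cons_of_pos (by simp [hcol]),
      List.countP_eq_zero.2 (by
        intro e he
        simp only [beq_iff_eq]
        rw [hedges] at he
        rw [hpcol e he]
        simp)]
  · rintro h
    refine ⟨hsurj.1, hsurj.2, ?_⟩
    intro u w hcyc b hcount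
    -- exactly one edge of color b
    have hpos : 0 < w.edges.countP fun e => δ e == b := by rw [hcount]; norm_num
    obtain ⟨e0, he0mem, he0col⟩ := List.countP_pos_iff.1 hpos
    rw [beq_iff_eq] at he0col
    have huniq : ∀ e ∈ w.edges, δ e = b → e = e0 := by
      intro e he hec
      have hlen : (w.edges.filter fun e => δ e == b).length = 1 := by
        rw [← List.countP_eq_length_filter]; exact hcount
      obtain ⟨a, ha⟩ := List.length_eq_one_iff.1 hlen
      have h1 : e ∈ w.edges.filter fun e => δ e == b :=
        List.mem_filter.2 ⟨he, by simp [hec]⟩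
      have h2 : e0 ∈ w.edges.filter fun e => δ e == b :=
        List.mem_filter.2 ⟨he0mem, by simp [he0col]⟩
      rw [ha] at h1 h2
      simp only [List.mem_singleton] at h1 h2
      rw [h1, h2]
    have hother : ∀ e ∈ w.edges, e ≠ e0 → δ e = !b := by
      intro e he hne
      by_contra hc
      have : δ e = b := by cases hδ : δ e <;> cases b <;> simp_all
      exact hne (huniq e he this)
    obtain ⟨x, y⟩ := e0
    have hadjxy : G.Adj x y := w.adj_of_mem_edges he0mem
    have := reach_aux w hcyc.edges_nodup x y he0mem hother
    have hreach : (colorSubgraph G δ (!b)).Reachable x y := by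
      rcases this with ⟨h1, h2⟩ | ⟨h1, h2⟩
      · exact h1.symm.trans h2.symm
      · exact h2.trans h1
    have := h (!b) x y hadjxy hreach
    rw [he0col] at this
    exact (Bool.not_eq_self b).1 this.symm
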